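/- (Existence half of Theorem 2: minimal realization.) For every causal operator T there exists a recurrent realization (A_i, B_i, C_i, D_i) of T whose state sizes satisfy n_i = rank(H_i) for every 1 ≤ i ≤ ℓ−1 (with n_0 = n_ℓ = 0). -/

import Mathlib

open Matrix

/-- `stProd n A i j` is the state-transition product `A (i-1) * A (i-2) * ⋯ * A j`
(mapping `ℝ^{n j}` to `ℝ^{n i}`), with the empty product (`i = j`) equal to the identity. -/
noncomputable def stProd (n : ℕ → ℕ) (A : ∀ i : ℕ, Matrix (Fin (n (i + 1))) (Fin (n i)) ℝ) :
    (i j : ℕ) → Matrix (Fin (n i)) (Fin (n j)) ℝ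
  | 0, j =>
      if h : (0 : ℕ) = j then
        (1 : Matrix (Fin (n 0)) (Fin (n 0)) ℝ).submatrix id (Fin.cast (congrArg n h.symm))
      else 0
  | i + 1, j =>
      if h : i + 1 = j then
        (1 : Matrix (Fin (n (i + 1))) (Fin (n (i + 1))) ℝ).submatrix id
          (Fin.cast (congrArg n h.symm))
      else A i * stProd n A i j

/-- `T` is a causal operator: its `d × d` blocks `T i j` vanish above the block diagonal. -/
def IsCausal (d ℓ : ℕ) (T : ℕ → ℕ → Matrix (Fin d) (Fin d) ℝ) : Prop :=
  ∀ i j, i < ℓ → j < ℓ → i < j → T i j = 0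

/-- `(A, B, C, D)` with state sizes `n` is a recurrent realization of the causal operator `T`:
`T i i = D i` and `T i j = C i * (A (i-1) * ⋯ * A (j+1)) * B j` for `i > j`. -/
def IsRealization (d ℓ : ℕ) (T : ℕ → ℕ → Matrix (Fin d) (Fin d) ℝ) (n : ℕ → ℕ)
    (A : ∀ i : ℕ, Matrix (Fin (n (i + 1))) (Fin (n i)) ℝ)
    (B : ∀ i : ℕ, Matrix (Fin (n (i + 1))) (Fin d) ℝ)
    (C : ∀ i : ℕ, Matrix (Fin d) (Fin (n i)) ℝ)
    (D : ℕ → Matrix (Fin d) (Fin d) ℝ) : Prop :=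
  (∀ i, i < ℓ → T i i = D i) ∧
  ∀ i j, i < ℓ → j < i → T i j = C i * stProd n A i (j + 1) * B j

/-- The operator submatrix `H_i = T_{i:,:i-1}`, with rows indexed by block row `i + k`
(`k < ℓ - i`) and columns by block column `j < i`. -/
def Hmat (d ℓ : ℕ) (T : ℕ → ℕ → Matrix (Fin d) (Fin d) ℝ) (i : ℕ) :
    Matrix (Fin (ℓ - i) × Fin d) (Fin i × Fin d) ℝ :=
  fun p q => T (i + (p.1 : ℕ)) (q.1 : ℕ) p.2 q.2

/-- The observability matrix at index `i`, with block rows `C (i+k) * A (i+k-1) * ⋯ * A i`. -/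
noncomputable def Obs (d ℓ : ℕ) (n : ℕ → ℕ)
    (A : ∀ i : ℕ, Matrix (Fin (n (i + 1))) (Fin (n i)) ℝ)
    (C : ∀ i : ℕ, Matrix (Fin d) (Fin (n i)) ℝ) (i : ℕ) :
    Matrix (Fin (ℓ - i) × Fin d) (Fin (n i)) ℝ :=
  fun p s => (C (i + (p.1 : ℕ)) * stProd n A (i + (p.1 : ℕ)) i) p.2 s

/-- The controllability matrix at index `i`, with block columns `A (i-1) * ⋯ * A (j+1) * B j`. -/
noncomputable def Ctrb (d : ℕ) (n : ℕ → ℕ)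
    (A : ∀ i : ℕ, Matrix (Fin (n (i + 1))) (Fin (n i)) ℝ)
    (B : ∀ i : ℕ, Matrix (Fin (n (i + 1))) (Fin d) ℝ) (i : ℕ) :
    Matrix (Fin (n i)) (Fin i × Fin d) ℝ :=
  fun s q => (stProd n A i ((q.1 : ℕ) + 1) * B (q.1 : ℕ)) s q.2


noncomputable section MinReal

variable {d ℓ : ℕ} (T : ℕ → ℕ → Matrix (Fin d) (Fin d) ℝ)

/-- state sizes -/
def nsz (d ℓ : ℕ) (T : ℕ → ℕ → Matrix (Fin d) (Fin d) ℝ) (i : ℕ) : ℕ :=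
  if 1 ≤ i ∧ i < ℓ then (Hmat d ℓ T i).rank else 0

lemma rank_factorization {m p : Type*} [Fintype m] [Fintype p] [DecidableEq m] [DecidableEq p]
    (M : Matrix m p ℝ) :
    ∃ (O : Matrix m (Fin M.rank) ℝ) (K : Matrix (Fin M.rank) p ℝ)
      (L : Matrix (Fin M.rank) m ℝ) (R : Matrix p (Fin M.rank) ℝ),
      M = O * K ∧ L * O = 1 ∧ K * R = 1 := by
  classical
  set V := LinearMap.range M.mulVecLin with hV
  have hfr : Module.finrank ℝ V = M.rank := rfl
  let b : Module.Basis (Fin M.rank) ℝ V := Module.finBasisOfFinrankEq ℝ V hfr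
  let bp := Pi.basisFun ℝ p
  let bm := Pi.basisFun ℝ m
  let ι : V →ₗ[ℝ] (m → ℝ) := V.subtype
  let g : (p → ℝ) →ₗ[ℝ] V := M.mulVecLin.rangeRestrict
  have hcomp : ι.comp g = M.mulVecLin := by ext x; rfl
  obtain ⟨L0, hL0⟩ := ι.exists_leftInverse_of_injective V.ker_subtype
  obtain ⟨R0, hR0⟩ := g.exists_rightInverse_of_surjective (LinearMap.range_rangeRestrict _)
  refine ⟨LinearMap.toMatrix b bm ι, LinearMap.toMatrix bp b g,
    LinearMap.toMatrix bm b L0, LinearMap.toMatrix b bp R0, ?_, ?_, ?_⟩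
  · rw [← LinearMap.toMatrix_comp bp b bm, hcomp]
    have : M.mulVecLin = Matrix.toLin bp bm M := by
      rw [Matrix.toLin_eq_toLin', ← Matrix.toLin'_apply']
    rw [this, LinearMap.toMatrix_toLin]
  · rw [← LinearMap.toMatrix_comp b bm b, hL0, LinearMap.toMatrix_id]
  · rw [← LinearMap.toMatrix_comp b bp b, hR0, LinearMap.toMatrix_id]

lemma facts (d ℓ : ℕ) (T : ℕ → ℕ → Matrix (Fin d) (Fin d) ℝ) (i : ℕ) :
    ∃ (O : Matrix (Fin (ℓ - i) × Fin d) (Fin (nsz d ℓ T i)) ℝ)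
      (K : Matrix (Fin (nsz d ℓ T i)) (Fin i × Fin d) ℝ)
      (L : Matrix (Fin (nsz d ℓ T i)) (Fin (ℓ - i) × Fin d) ℝ)
      (R : Matrix (Fin i × Fin d) (Fin (nsz d ℓ T i)) ℝ),
      Hmat d ℓ T i = O * K ∧ L * O = 1 ∧ (i < ℓ → K * R = 1) := by
  by_cases hi : 1 ≤ i ∧ i < ℓ
  · obtain ⟨O, K, L, R, h1, h2, h3⟩ := rank_factorization (Hmat d ℓ T i)
    have hn : nsz d ℓ T i = (Hmat d ℓ T i).rank := if_pos hi
    let e : Fin ((Hmat d ℓ T i).rank) ≃ Fin (nsz d ℓ T i) := finCongr hn.symm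
    refine ⟨O.submatrix id e.symm, K.submatrix e.symm id,
      L.submatrix e.symm id, R.submatrix id e.symm, ?_, ?_, fun _ => ?_⟩
    · rw [show (id : Fin (ℓ - i) × Fin d → _) = ((Equiv.refl _) : Fin (ℓ - i) × Fin d ≃ _) from rfl,
        show (id : Fin i × Fin d → _) = ((Equiv.refl _) : Fin i × Fin d ≃ _) from rfl]
      rw [Matrix.submatrix_mul_equiv O K _ e.symm _]
      simpa using h1
    · have := Matrix.submatrix_mul_equiv L O (e.symm : Fin (nsz d ℓ T i) → _)
        (Equiv.refl (Fin (ℓ - i) × Fin d)) (e.symm : Fin (nsz d ℓ T i) → _)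
      simp only [Equiv.coe_refl] at this
      rw [this, h2, Matrix.submatrix_one_equiv]
    · have := Matrix.submatrix_mul_equiv K R (e.symm : Fin (nsz d ℓ T i) → _)
        (Equiv.refl (Fin i × Fin d)) (e.symm : Fin (nsz d ℓ T i) → _)
      simp only [Equiv.coe_refl] at this
      rw [this, h3, Matrix.submatrix_one_equiv]
  · have hn : nsz d ℓ T i = 0 := if_neg hi
    haveI : IsEmpty (Fin (nsz d ℓ T i)) := by rw [hn]; exact Fin.isEmpty
    refine ⟨0, 0, 0, 0, ?_, ?_, fun hiℓ => ?_⟩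
    · ext p q
      rcases Nat.lt_or_ge i 1 with h | h
      · interval_cases i
        exact absurd q.1.2 (by omega)
      · have : ℓ ≤ i := by omega
        have : (p.1 : ℕ) < ℓ - i := p.1.2
        omega
    · ext s t; exact isEmptyElim s
    · ext s t; exact isEmptyElim s



def mkKs {d : ℕ} (n : ℕ → ℕ) (K : ∀ i : ℕ, Matrix (Fin (n i)) (Fin i × Fin d) ℝ)
    (i : ℕ) : Matrix (Fin (n (i + 1))) (Fin i × Fin d) ℝ :=
  Matrix.of fun s q => K (i + 1) s (⟨(q.1 : ℕ), Nat.lt_succ_of_lt q.1.2⟩, q.2)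

def mkOd {d ℓ : ℕ} (n : ℕ → ℕ)
    (O : ∀ i : ℕ, Matrix (Fin (ℓ - i) × Fin d) (Fin (n i)) ℝ) (i : ℕ) :
    Matrix (Fin (ℓ - (i + 1)) × Fin d) (Fin (n i)) ℝ :=
  Matrix.of fun p s => O i (⟨(p.1 : ℕ) + 1, by have := p.1.2; omega⟩, p.2) s

lemma stProd_self (n : ℕ → ℕ) (A : ∀ i : ℕ, Matrix (Fin (n (i + 1))) (Fin (n i)) ℝ) (i : ℕ) :
    stProd n A i i = 1 := by
  cases i with
  | zero =>
      rw [stProd, dif_pos rfl]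
      ext a b
      simp [Matrix.one_apply, Fin.ext_iff]
  | succ i =>
      rw [stProd, dif_pos rfl]
      ext a b
      simp [Matrix.one_apply, Fin.ext_iff]

lemma stProd_step (n : ℕ → ℕ) (A : ∀ i : ℕ, Matrix (Fin (n (i + 1))) (Fin (n i)) ℝ)
    (i j : ℕ) (h : i + 1 ≠ j) : stProd n A (i + 1) j = A i * stProd n A i j := by
  rw [stProd, dif_neg h]

end MinReal


section Build

variable {d ℓ : ℕ} (n : ℕ → ℕ)
  (O : ∀ i : ℕ, Matrix (Fin (ℓ - i) × Fin d) (Fin (n i)) ℝ)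
  (K : ∀ i : ℕ, Matrix (Fin (n i)) (Fin i × Fin d) ℝ)
  (L : ∀ i : ℕ, Matrix (Fin (n i)) (Fin (ℓ - i) × Fin d) ℝ)
  (R : ∀ i : ℕ, Matrix (Fin i × Fin d) (Fin (n i)) ℝ)

noncomputable def mkA (i : ℕ) : Matrix (Fin (n (i + 1))) (Fin (n i)) ℝ := mkKs n K i * R i

noncomputable def mkB (i : ℕ) : Matrix (Fin (n (i + 1))) (Fin d) ℝ :=
  Matrix.of fun s q => K (i + 1) s (⟨i, Nat.lt_succ_self i⟩, q)

noncomputable def mkC (i : ℕ) : Matrix (Fin d) (Fin (n i)) ℝ :=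
  if h : i < ℓ then Matrix.of (fun p s => O i (⟨0, by omega⟩, p) s) else 0

lemma build (T : ℕ → ℕ → Matrix (Fin d) (Fin d) ℝ)
    (hOK : ∀ i, Hmat d ℓ T i = O i * K i)
    (hLO : ∀ i, L i * O i = 1)
    (hKR : ∀ i, i < ℓ → K i * R i = 1) :
    IsRealization d ℓ T n (mkA n K R) (mkB n K) (mkC n O) (fun i => T i i) := by
  have hstep1 : ∀ i : ℕ, i + 1 < ℓ → O (i + 1) * mkKs n K i = mkOd n O i * K i := by
    intro i hi
    ext p jq
    obtain ⟨j, q⟩ := jq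
    have l1 : (O (i + 1) * mkKs n K i) p (j, q)
        = (O (i + 1) * K (i + 1)) p (⟨(j : ℕ), Nat.lt_succ_of_lt j.2⟩, q) := by
      simp only [mul_apply, mkKs, Matrix.of_apply]
    have l2 : (mkOd n O i * K i) p (j, q)
        = (O i * K i) (⟨(p.1 : ℕ) + 1, by have := p.1.2; omega⟩, p.2) (j, q) := by
      simp only [mul_apply, mkOd, Matrix.of_apply]
    rw [l1, l2, ← hOK, ← hOK]
    show T (i + 1 + (p.1 : ℕ)) (j : ℕ) p.2 q = T (i + ((p.1 : ℕ) + 1)) (j : ℕ) p.2 q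
    rw [show i + 1 + (p.1 : ℕ) = i + ((p.1 : ℕ) + 1) by omega]
  have hAK : ∀ i : ℕ, i + 1 < ℓ → mkA n K R i * K i = mkKs n K i := by
    intro i hi
    have e1 : O (i + 1) * (mkA n K R i * K i) = O (i + 1) * mkKs n K i := by
      calc O (i + 1) * (mkKs n K i * R i * K i)
          = (O (i + 1) * mkKs n K i) * (R i * K i) := by simp only [← Matrix.mul_assoc]
        _ = (mkOd n O i * K i) * (R i * K i) := by rw [hstep1 i hi]
        _ = mkOd n O i * ((K i * R i) * K i) := by simp only [← Matrix.mul_assoc]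
        _ = mkOd n O i * K i := by rw [hKR i (by omega), Matrix.one_mul]
        _ = O (i + 1) * mkKs n K i := (hstep1 i hi).symm
    calc mkA n K R i * K i
        = (L (i + 1) * O (i + 1)) * (mkA n K R i * K i) := by rw [hLO, Matrix.one_mul]
      _ = L (i + 1) * (O (i + 1) * (mkA n K R i * K i)) := by rw [Matrix.mul_assoc]
      _ = L (i + 1) * (O (i + 1) * mkKs n K i) := by rw [e1]
      _ = (L (i + 1) * O (i + 1)) * mkKs n K i := by rw [Matrix.mul_assoc]
      _ = mkKs n K i := by rw [hLO, Matrix.one_mul]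
  have hCtrb : ∀ (j i : ℕ) (h1 : j + 1 ≤ i), i < ℓ → ∀ (s : Fin (n i)) (q : Fin d),
      (stProd n (mkA n K R) i (j + 1) * mkB n K j) s q = K i s (⟨j, h1⟩, q) := by
    intro j i h1
    induction i, h1 using Nat.le_induction with
    | base =>
        intro hiℓ s q
        rw [stProd_self, Matrix.one_mul]
        rfl
    | succ i hji IH =>
        intro hiℓ s q
        rw [stProd_step n (mkA n K R) i (j + 1) (by omega), Matrix.mul_assoc, mul_apply]
        calc ∑ t, mkA n K R i s t * (stProd n (mkA n K R) i (j + 1) * mkB n K j) t q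
            = ∑ t, mkA n K R i s t * K i t (⟨j, hji⟩, q) :=
              Finset.sum_congr rfl (fun t _ => by rw [IH (by omega) t q])
          _ = (mkA n K R i * K i) s (⟨j, hji⟩, q) := (mul_apply).symm
          _ = mkKs n K i s (⟨j, hji⟩, q) := by rw [hAK i hiℓ]
          _ = K (i + 1) s (⟨j, Nat.lt_succ_of_lt hji⟩, q) := rfl
  refine ⟨fun i _ => rfl, ?_⟩
  intro i j hi hj
  ext p q
  rw [Matrix.mul_assoc, mul_apply]
  calc T i j p q
      = (O i * K i) (⟨0, by omega⟩, p) (⟨j, hj⟩, q) := by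
        rw [← hOK]
        show T i j p q = T (i + (0 : ℕ)) j p q
        rw [Nat.add_zero]
    _ = ∑ s, O i (⟨0, by omega⟩, p) s * K i s (⟨j, hj⟩, q) := mul_apply
    _ = ∑ s, mkC n O i p s * (stProd n (mkA n K R) i (j + 1) * mkB n K j) s q := by
        refine Finset.sum_congr rfl (fun s _ => ?_)
        rw [hCtrb j i hj hi s q, mkC, dif_pos hi]
        rfl

end Build

/-- existence half of Theorem 2: every causal operator `T` admits a recurrent
realization whose state sizes satisfy `n i = rank H_i` for `1 ≤ i ≤ ℓ - 1`
(with `n 0 = n ℓ = 0`). -/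
theorem minimal_realization_exists (d ℓ : ℕ) (hd : 1 ≤ d) (hℓ : 1 ≤ ℓ)
    (T : ℕ → ℕ → Matrix (Fin d) (Fin d) ℝ) (hT : IsCausal d ℓ T) :
    ∃ (n : ℕ → ℕ)
      (A : ∀ i : ℕ, Matrix (Fin (n (i + 1))) (Fin (n i)) ℝ)
      (B : ∀ i : ℕ, Matrix (Fin (n (i + 1))) (Fin d) ℝ)
      (C : ∀ i : ℕ, Matrix (Fin d) (Fin (n i)) ℝ)
      (D : ℕ → Matrix (Fin d) (Fin d) ℝ),
      IsRealization d ℓ T n A B C D ∧ n 0 = 0 ∧ n ℓ = 0 ∧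
        ∀ i, 1 ≤ i → i < ℓ → n i = (Hmat d ℓ T i).rank := by
  classical
  choose O K L R hOK hLO hKR using facts d ℓ T
  refine ⟨nsz d ℓ T, mkA _ K R, mkB _ K, mkC _ O, fun i => T i i,
    build _ O K L R T hOK hLO hKR, ?_, ?_, ?_⟩
  · simp [nsz]
  · simp [nsz]
  · intro i h1 h2
    exact if_pos ⟨h1, h2⟩
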